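/- arXiv:2508.04991 — 2 statements merged into one kernel-verified Lean document; each statement's English description precedes it below -/
import Mathlib

section
/- Let K ⊆ ℝⁿ be a nonempty closed set, f = (f_1,…,f_q) a vector polynomial, x̄ ∈ K, and I a nonempty subset of {1,…,q}. If f_i is bounded from below on K_x̄ for every i ∈ I, then 0 ∈ SOL^w((K_x̄)_∞, f^∞). If f_i is bounded from below on K_x̄ for every i ∈ {1,…,q}, then 0 ∈ SOL^s((K_x̄)_∞, f^∞). -/
open Filter Topology MvPolynomial Bornology

noncomputable section

/-- The asymptotic (recession) cone of a set `A ⊆ ℝⁿ`. -/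
def asymCone {n : ℕ} (A : Set (Fin n → ℝ)) : Set (Fin n → ℝ) :=
  {v | ∃ (t : ℕ → ℝ) (x : ℕ → (Fin n → ℝ)),
    Filter.Tendsto t Filter.atTop Filter.atTop ∧ (∀ k, x k ∈ A) ∧
    Filter.Tendsto (fun k => (t k)⁻¹ • x k) Filter.atTop (nhds v)}

/-- Pareto efficient solutions of the vector map `g` on `C`. -/
def SOLs {n q : ℕ} (C : Set (Fin n → ℝ)) (g : Fin q → (Fin n → ℝ) → ℝ) :
    Set (Fin n → ℝ) :=
  {x | x ∈ C ∧ ¬ ∃ y ∈ C, (∀ i, g i y ≤ g i x) ∧ (∃ i, g i y ≠ g i x)}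

/-- Weak Pareto efficient solutions of the vector map `g` on `C`. -/
def SOLw {n q : ℕ} (C : Set (Fin n → ℝ)) (g : Fin q → (Fin n → ℝ) → ℝ) :
    Set (Fin n → ℝ) :=
  {x | x ∈ C ∧ ¬ ∃ y ∈ C, ∀ i, g i y < g i x}

/-- Global minimizers of a scalar function `p` on `C`. -/
def SOLmin {n : ℕ} (C : Set (Fin n → ℝ)) (p : (Fin n → ℝ) → ℝ) :
    Set (Fin n → ℝ) :=
  {x | x ∈ C ∧ ∀ y ∈ C, p x ≤ p y}

/-- The recession polynomial (leading term: top-degree homogeneous part) of a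
polynomial, as a function on `ℝⁿ`. -/
noncomputable def recPoly {n : ℕ} (p : MvPolynomial (Fin n) ℝ) : (Fin n → ℝ) → ℝ :=
  fun x => MvPolynomial.eval x (MvPolynomial.homogeneousComponent p.totalDegree p)

lemma eval_smul_homog {n j : ℕ} {φ : MvPolynomial (Fin n) ℝ} (hφ : φ.IsHomogeneous j)
    (c : ℝ) (x : Fin n → ℝ) : eval (c • x) φ = c ^ j * eval x φ := by
  rw [eval_eq, eval_eq, Finset.mul_sum]
  apply Finset.sum_congr rfl
  intro d hd
  have hdeg : d.degree = j := by
    by_contra h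
    exact (mem_support_iff.mp hd) (hφ.coeff_eq_zero h)
  have : (∏ i ∈ d.support, (c • x) i ^ d i) = c ^ j * ∏ i ∈ d.support, x i ^ d i := by
    simp only [Pi.smul_apply, smul_eq_mul, mul_pow, Finset.prod_mul_distrib,
      Finset.prod_pow_eq_pow_sum]
    rw [← hdeg, Finsupp.degree]
    rfl
  rw [this]; ring

set_option maxHeartbeats 1000000 in
lemma recPoly_nonneg_on_cone {n : ℕ} (S : Set (Fin n → ℝ)) (p : MvPolynomial (Fin n) ℝ)
    (hd1 : 1 ≤ p.totalDegree) (m : ℝ) (hb : ∀ x ∈ S, m ≤ eval x p)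
    {y : Fin n → ℝ} (hy : y ∈ asymCone S) : 0 ≤ recPoly p y := by
  obtain ⟨t, x, ht, hxS, hlim⟩ := hy
  set d := p.totalDegree with hd
  set v : ℕ → (Fin n → ℝ) := fun k => (t k)⁻¹ • x k with hv
  set G : ℝ → (Fin n → ℝ) → ℝ := fun s w =>
    ∑ j ∈ Finset.range (d + 1), s ^ (d - j) * eval w (homogeneousComponent j p) with hG
  have hpos : ∀ᶠ k in atTop, 0 < t k := ht.eventually_gt_atTop 0
  -- eventual equality
  have key : ∀ᶠ k in atTop, (t k)⁻¹ ^ d * eval (x k) p = G ((t k)⁻¹) (v k) := by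
    filter_upwards [hpos] with k hk
    have htk : t k ≠ 0 := ne_of_gt hk
    have hx' : x k = t k • v k := by
      rw [hv]; simp [smul_smul, mul_inv_cancel₀ htk]
    rw [hx']
    conv_lhs => rw [← MvPolynomial.sum_homogeneousComponent p]
    rw [map_sum, Finset.mul_sum]
    apply Finset.sum_congr rfl
    intro j hj
    have hjd : j ≤ d := Nat.lt_succ_iff.mp (Finset.mem_range.mp hj)
    rw [eval_smul_homog (homogeneousComponent_isHomogeneous j p)]
    have : (t k)⁻¹ ^ d * (t k) ^ j = (t k)⁻¹ ^ (d - j) := by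
      rw [← Nat.sub_add_cancel hjd, pow_add]
      rw [Nat.add_sub_cancel, mul_assoc, ← mul_pow, inv_mul_cancel₀ htk, one_pow, mul_one]
    rw [← mul_assoc, this]
  -- continuity / limit
  have hGcont : Continuous fun sw : ℝ × (Fin n → ℝ) => G sw.1 sw.2 := by
    apply continuous_finset_sum
    intro j _
    exact ((continuous_fst.pow _).mul ((MvPolynomial.continuous_eval _).comp continuous_snd))
  have hinv : Tendsto (fun k => (t k)⁻¹) atTop (nhds 0) := ht.inv_tendsto_atTop
  have hlimG : Tendsto (fun k => G ((t k)⁻¹) (v k)) atTop (nhds (G 0 y)) := by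
    exact (hGcont.tendsto (0, y)).comp (hinv.prodMk_nhds hlim)
  have hG0 : G 0 y = recPoly p y := by
    have hGy : G 0 y = ∑ j ∈ Finset.range (d + 1),
        (0:ℝ) ^ (d - j) * eval y (homogeneousComponent j p) := rfl
    rw [hGy, Finset.sum_eq_single d]
    · simp [recPoly]
      rfl
    · intro j hj hne
      have hjd : j ≤ d := Nat.lt_succ_iff.mp (Finset.mem_range.mp hj)
      have : d - j ≠ 0 := by omega
      simp [zero_pow this]
    · intro h; exact absurd (Finset.self_mem_range_succ d) h
  have hmain : Tendsto (fun k => (t k)⁻¹ ^ d * eval (x k) p) atTop (nhds (recPoly p y)) := by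
    rw [← hG0]; exact hlimG.congr' (key.mono fun k hk => hk.symm)
  have hlow : Tendsto (fun k => m * (t k)⁻¹ ^ d) atTop (nhds 0) := by
    have : Tendsto (fun k => (t k)⁻¹ ^ d) atTop (nhds 0) := by
      have := hinv.pow d
      rwa [zero_pow (by omega : d ≠ 0)] at this
    simpa using this.const_mul m
  have hle : ∀ᶠ k in atTop, m * (t k)⁻¹ ^ d ≤ (t k)⁻¹ ^ d * eval (x k) p := by
    filter_upwards [hpos] with k hk
    rw [mul_comm ((t k)⁻¹ ^ d) (eval (x k) p)]
    exact mul_le_mul_of_nonneg_right (hb _ (hxS k)) (pow_nonneg (inv_nonneg.mpr hk.le) d)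
  exact le_of_tendsto_of_tendsto hlow hmain hle

lemma zero_mem_asymCone {n : ℕ} {A : Set (Fin n → ℝ)} (hA : A.Nonempty) :
    (0 : Fin n → ℝ) ∈ asymCone A := by
  obtain ⟨a, ha⟩ := hA
  refine ⟨fun k => (k : ℝ), fun _ => a, tendsto_natCast_atTop_atTop, fun _ => ha, ?_⟩
  have := (tendsto_inv_atTop_zero.comp (tendsto_natCast_atTop_atTop (R := ℝ))).smul_const a
  simpa using this

lemma recPoly_zero {n : ℕ} {p : MvPolynomial (Fin n) ℝ} (hd : 1 ≤ p.totalDegree) :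
    recPoly p 0 = 0 := by
  have h := eval_smul_homog (homogeneousComponent_isHomogeneous p.totalDegree p)
    (0 : ℝ) (0 : Fin n → ℝ)
  rw [smul_zero, zero_pow (by omega : p.totalDegree ≠ 0), zero_mul] at h
  exact h

theorem stmt3 {n q : ℕ} (K : Set (Fin n → ℝ)) (hKne : K.Nonempty) (hKcl : IsClosed K)
    (f : Fin q → MvPolynomial (Fin n) ℝ) (hdeg : ∀ i, 1 ≤ (f i).totalDegree)
    (xbar : Fin n → ℝ) (hx : xbar ∈ K)
    (I : Finset (Fin q)) (hI : I.Nonempty) :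
    ((∀ i ∈ I, ∃ m : ℝ, ∀ x ∈ {x ∈ K | ∀ j, eval x (f j) ≤ eval xbar (f j)},
        m ≤ eval x (f i)) →
      (0 : Fin n → ℝ) ∈ SOLw (asymCone {x ∈ K | ∀ j, eval x (f j) ≤ eval xbar (f j)})
        (fun i => recPoly (f i))) ∧
    ((∀ i, ∃ m : ℝ, ∀ x ∈ {x ∈ K | ∀ j, eval x (f j) ≤ eval xbar (f j)},
        m ≤ eval x (f i)) →
      (0 : Fin n → ℝ) ∈ SOLs (asymCone {x ∈ K | ∀ j, eval x (f j) ≤ eval xbar (f j)})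
        (fun i => recPoly (f i))) := by
  set S : Set (Fin n → ℝ) := {x ∈ K | ∀ j, eval x (f j) ≤ eval xbar (f j)} with hS
  have hSne : S.Nonempty := ⟨xbar, hx, fun j => le_refl _⟩
  have h0mem : (0 : Fin n → ℝ) ∈ asymCone S := zero_mem_asymCone hSne
  constructor
  · intro hb
    refine ⟨h0mem, ?_⟩
    rintro ⟨y, hyC, hlt⟩
    obtain ⟨i, hiI⟩ := hI
    obtain ⟨m, hm⟩ := hb i hiI
    have h0 : 0 ≤ recPoly (f i) y := recPoly_nonneg_on_cone S (f i) (hdeg i) m hm hyC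
    have := hlt i
    simp only [recPoly_zero (hdeg i)] at this
    linarith
  · intro hb
    refine ⟨h0mem, ?_⟩
    rintro ⟨y, hyC, hle, i, hne⟩
    obtain ⟨m, hm⟩ := hb i
    have h0 : 0 ≤ recPoly (f i) y := recPoly_nonneg_on_cone S (f i) (hdeg i) m hm hyC
    have h1 := hle i
    simp only [recPoly_zero (hdeg i)] at h1
    exact hne (by simp only [recPoly_zero (hdeg i)]; linarith)
end
end

section
/- Let f = (f_1,…,f_q) be a vector polynomial, S ⊆ ℝⁿ a nonempty set, and I a nonempty subset of {1,…,q} such that f_i is bounded from below on S for every i ∈ I. Then there exists λ ∈ ℝ^q with λ_i ≥ 0 for all i and λ ≠ 0 such that 0 ∈ SOL(S_∞, (Σ_{i=1}^q λ_i f_i)^∞). -/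
open Filter Topology MvPolynomial Bornology

noncomputable section

/-- Evaluation of a homogeneous polynomial at a scalar multiple. -/
lemma eval_smul_isHomog {n j : ℕ} {p : MvPolynomial (Fin n) ℝ} (h : p.IsHomogeneous j)
    (t : ℝ) (y : Fin n → ℝ) : eval (t • y) p = t ^ j * eval y p := by
  rw [eval_eq', eval_eq', Finset.mul_sum]
  refine Finset.sum_congr rfl fun d hd => ?_
  have hw := h (mem_support_iff.mp hd)
  have hdj : ∑ i, d i = j := by
    rw [Finsupp.weight_apply] at hw
    rw [← hw, Finsupp.sum_fintype]
    · simp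
    · intro i; rfl
  have hterm : ∀ i ∈ Finset.univ, (t • y) i ^ d i = t ^ d i * y i ^ d i := by
    intro i _
    simp [mul_pow]
  rw [Finset.prod_congr rfl hterm, Finset.prod_mul_distrib, Finset.prod_pow_eq_pow_sum, hdj]
  ring

/-- 0 belongs to the asymptotic cone of a nonempty set. -/
lemma zero_mem_asymCone_s4 {n : ℕ} {S : Set (Fin n → ℝ)} (hS : S.Nonempty) :
    (0 : Fin n → ℝ) ∈ asymCone S := by
  obtain ⟨x₀, hx₀⟩ := hS
  refine ⟨fun k => (k : ℝ) + 1, fun _ => x₀, ?_, fun _ => hx₀, ?_⟩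
  · exact tendsto_atTop_add_const_right _ 1 (tendsto_natCast_atTop_atTop (R := ℝ))
  · have h1 : Tendsto (fun k : ℕ => ((k : ℝ) + 1)⁻¹) atTop (nhds 0) :=
      (tendsto_atTop_add_const_right _ 1 (tendsto_natCast_atTop_atTop (R := ℝ))).inv_tendsto_atTop
    have := h1.smul_const x₀
    simpa using this

/-- The key lemma: if a polynomial of positive degree is bounded below on `S`, then its
leading form is nonnegative on the asymptotic cone of `S`. -/
lemma recPoly_nonneg_on_asymCone {n : ℕ} {p : MvPolynomial (Fin n) ℝ}
    (hdeg : 1 ≤ p.totalDegree) {S : Set (Fin n → ℝ)} {m : ℝ}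
    (hm : ∀ x ∈ S, m ≤ eval x p) :
    ∀ v ∈ asymCone S, 0 ≤ recPoly p v := by
  intro v hv
  by_contra hneg
  push_neg at hneg
  obtain ⟨t, x, ht, hxS, hxy⟩ := hv
  set d := p.totalDegree with hd
  set y : ℕ → (Fin n → ℝ) := fun k => (t k)⁻¹ • x k with hy
  -- the auxiliary continuous function
  set F : ℝ × (Fin n → ℝ) → ℝ :=
    fun z => ∑ j ∈ Finset.range (d + 1), z.1 ^ (d - j) * eval z.2 (homogeneousComponent j p)
    with hF
  have hFcont : Continuous F := by
    apply continuous_finset_sum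
    intro j _
    exact ((continuous_fst.pow _)).mul ((continuous_eval _).comp continuous_snd)
  -- for s ≠ 0, eval (s • w) p = s^d * F (s⁻¹, w)
  have key : ∀ (s : ℝ), s ≠ 0 → ∀ w : Fin n → ℝ, eval (s • w) p = s ^ d * F (s⁻¹, w) := by
    intro s hs w
    conv_lhs => rw [← p.sum_homogeneousComponent]
    rw [map_sum]
    simp only [hF, Finset.mul_sum]
    refine Finset.sum_congr rfl fun j hj => ?_
    rw [eval_smul_isHomog (homogeneousComponent_isHomogeneous j p) s w]
    have hjd : j ≤ d := Nat.lt_succ_iff.mp (Finset.mem_range.mp hj)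
    have h2 : s ^ d * (s⁻¹) ^ (d - j) = s ^ j := by
      rw [inv_pow, mul_comm, inv_mul_eq_div, div_eq_iff (pow_ne_zero _ hs), ← pow_add]
      congr 1
      omega
    rw [← mul_assoc, h2]
  -- F(0, v) = recPoly p v
  have hF0 : F (0, v) = recPoly p v := by
    simp only [hF]
    rw [Finset.sum_eq_single d]
    · simp [recPoly, hd]
    · intro j hj hjd
      have hjd' : j < d := lt_of_le_of_ne (Nat.lt_succ_iff.mp (Finset.mem_range.mp hj)) hjd
      have : d - j ≠ 0 := Nat.sub_ne_zero_of_lt hjd'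
      simp [zero_pow this]
    · intro h
      exact absurd (Finset.self_mem_range_succ d) h
  -- F((t k)⁻¹, y k) → recPoly p v
  have hlim : Tendsto (fun k => F ((t k)⁻¹, y k)) atTop (nhds (recPoly p v)) := by
    rw [← hF0]
    apply hFcont.continuousAt.tendsto.comp
    apply Tendsto.prodMk_nhds
    · exact ht.inv_tendsto_atTop
    · exact hxy
  set L := recPoly p v with hL
  -- eventually F < L/2 < 0
  have hL2 : L / 2 < 0 := by linarith
  have hev : ∀ᶠ k in atTop, F ((t k)⁻¹, y k) < L / 2 :=
    hlim.eventually_lt_const (by linarith)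
  have htpos : ∀ᶠ k in atTop, 0 < t k := ht.eventually_gt_atTop 0
  -- (t k)^d → atTop
  have htd : Tendsto (fun k => (t k) ^ d) atTop atTop :=
    (tendsto_pow_atTop (by omega : d ≠ 0)).comp ht
  -- eval (x k) p ≤ (t k)^d * (L/2) eventually
  have hbound : ∀ᶠ k in atTop, eval (x k) p ≤ (t k) ^ d * (L / 2) := by
    filter_upwards [hev, htpos] with k h1 h2
    have hx : x k = t k • y k := by
      rw [hy]; simp [smul_smul, mul_inv_cancel₀ (ne_of_gt h2)]
    rw [hx, key (t k) (ne_of_gt h2) (y k)]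
    exact mul_le_mul_of_nonneg_left (le_of_lt h1) (pow_nonneg (le_of_lt h2) d)
  -- but (t k)^d * (L/2) → -∞
  have hbot : Tendsto (fun k => (t k) ^ d * (L / 2)) atTop atBot :=
    Tendsto.atTop_mul_const_of_neg hL2 htd
  have : ∀ᶠ k in atTop, eval (x k) p < m := by
    have := hbot.eventually_lt_atBot m
    filter_upwards [hbound, this] with k h1 h2
    linarith
  obtain ⟨k, hk⟩ := this.exists
  exact absurd (hm (x k) (hxS k)) (not_le.mpr hk)

theorem stmt4 {n q : ℕ} (f : Fin q → MvPolynomial (Fin n) ℝ)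
    (hdeg : ∀ i, 1 ≤ (f i).totalDegree)
    (S : Set (Fin n → ℝ)) (hSne : S.Nonempty)
    (I : Finset (Fin q)) (hI : I.Nonempty)
    (hbd : ∀ i ∈ I, ∃ m : ℝ, ∀ x ∈ S, m ≤ eval x (f i)) :
    ∃ lam : Fin q → ℝ, (∀ i, 0 ≤ lam i) ∧ lam ≠ 0 ∧
      (0 : Fin n → ℝ) ∈
        SOLmin (asymCone S) (recPoly (∑ i, MvPolynomial.C (lam i) * f i)) := by
  obtain ⟨i₀, hi₀⟩ := hI
  refine ⟨fun i => if i = i₀ then 1 else 0, ?_, ?_, ?_⟩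
  · intro i; dsimp only; split <;> norm_num
  · intro h
    have := congrFun h i₀
    simp at this
  · have hsum : (∑ i, MvPolynomial.C ((fun i => if i = i₀ then (1:ℝ) else 0) i) * f i)
        = f i₀ := by
      rw [Finset.sum_eq_single i₀]
      · simp
      · intro j _ hj; simp [hj]
      · intro h; exact absurd (Finset.mem_univ i₀) h
    rw [hsum]
    obtain ⟨m, hm⟩ := hbd i₀ hi₀
    refine ⟨zero_mem_asymCone_s4 hSne, ?_⟩
    intro v hv
    have h0 : recPoly (f i₀) 0 = 0 := by
      simp only [recPoly, eval_zero, constantCoeff_eq, coeff_homogeneousComponent]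
      rw [if_neg]
      have := hdeg i₀
      simp only [map_zero]
      omega
    rw [h0]
    exact recPoly_nonneg_on_asymCone (hdeg i₀) hm v hv
end
end
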